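/- Let B = [[0, Cᵀ],[C, 0]] be a symmetric (2n+r)×(2n+r) real matrix (blocks of sizes n and n+r) and suppose C has singular value decomposition C = P₂ [[0],[σ]] qᵀ with P₂ = [[p₁,p₃],[p₂,p]] ∈ O(n+r), q ∈ O(n), σ = diag(σ₁,...,σₙ). Set P = diag(q, P₂) (block sizes n, n+r). Then e^{sB} = P · [[ch(sσ), 0, sh(sσ)],[0, I_r, 0],[sh(sσ), 0, ch(sσ)]] · Pᵀ, where ch(sσ) = (e^{sσ}+e^{-sσ})/2 and sh(sσ) = (e^{sσ}-e^{-sσ})/2. -/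

import Mathlib

open Matrix

/-- Conjugation by `W = [[1,0,1],[0,1,0],[-1,0,1]]` of a diagonal matrix. -/
lemma aux_conj (n r : ℕ) (f g : Fin n → ℝ) (e : Fin r → ℝ) :
    (Matrix.fromBlocks (1 : Matrix (Fin n) (Fin n) ℝ) (Matrix.fromCols 0 1)
        (Matrix.fromRows 0 (-1)) (1 : Matrix (Fin r ⊕ Fin n) (Fin r ⊕ Fin n) ℝ)) *
      Matrix.diagonal (Sum.elim f (Sum.elim e g)) *
      (Matrix.fromBlocks ((1/2 : ℝ) • 1) (Matrix.fromCols 0 (-((1/2 : ℝ) • 1)))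
        (Matrix.fromRows 0 ((1/2 : ℝ) • 1)) (Matrix.fromBlocks 1 0 0 ((1/2 : ℝ) • 1))) =
    Matrix.fromBlocks (Matrix.diagonal fun i => (f i + g i) / 2)
      (Matrix.fromCols 0 (Matrix.diagonal fun i => (g i - f i) / 2))
      (Matrix.fromRows 0 (Matrix.diagonal fun i => (g i - f i) / 2))
      (Matrix.fromBlocks (Matrix.diagonal e) 0 0 (Matrix.diagonal fun i => (f i + g i) / 2)) := by
  ext i j
  rw [Matrix.mul_apply]
  rcases i with i | i | i <;> rcases j with j | j | j <;>
    simp [Matrix.mul_apply, Fintype.sum_sum_type, Matrix.diagonal_apply, Matrix.one_apply,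
      mul_ite, ite_mul, Finset.sum_ite_eq, Finset.sum_ite_eq'] <;>
    (try split) <;> (try subst_vars) <;> ring

lemma aux_WWinv (n r : ℕ) :
    (Matrix.fromBlocks (1 : Matrix (Fin n) (Fin n) ℝ) (Matrix.fromCols 0 1)
        (Matrix.fromRows 0 (-1)) (1 : Matrix (Fin r ⊕ Fin n) (Fin r ⊕ Fin n) ℝ)) *
      (Matrix.fromBlocks ((1/2 : ℝ) • 1) (Matrix.fromCols 0 (-((1/2 : ℝ) • 1)))
        (Matrix.fromRows 0 ((1/2 : ℝ) • 1)) (Matrix.fromBlocks 1 0 0 ((1/2 : ℝ) • 1))) = 1 := by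
  ext i j
  rcases i with i | i | i <;> rcases j with j | j | j <;>
    simp [Matrix.mul_apply, Fintype.sum_sum_type, Matrix.one_apply,
      mul_ite, ite_mul, Finset.sum_ite_eq, Finset.sum_ite_eq'] <;>
    (try split) <;> (try subst_vars) <;> ring

set_option maxHeartbeats 1000000 in
/-- for `B = [[0,Cᵀ],[C,0]]` (block sizes `n`, `r+n`) with singular value
decomposition `C = P₂ [[0],[σ]] qᵀ`, `P₂ = [[p₁,p₃],[p₂,p]] ∈ O(r+n)`, `q ∈ O(n)`,
`σ = diag(σᵢ)`, and `P = diag(q, P₂)`, one has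
`e^{sB} = P [[ch(sσ),0,sh(sσ)],[0,I_r,0],[sh(sσ),0,ch(sσ)]] Pᵀ`, where
`ch(x) = (eˣ + e⁻ˣ)/2` and `sh(x) = (eˣ - e⁻ˣ)/2` are applied to the diagonal. -/
theorem stmt15 (n r : ℕ)
    (C : Matrix (Fin r ⊕ Fin n) (Fin n) ℝ)
    (B : Matrix (Fin n ⊕ (Fin r ⊕ Fin n)) (Fin n ⊕ (Fin r ⊕ Fin n)) ℝ)
    (hB : B = Matrix.fromBlocks 0 Cᵀ C 0)
    (p₁ : Matrix (Fin r) (Fin r) ℝ) (p₃ : Matrix (Fin r) (Fin n) ℝ)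
    (p₂ : Matrix (Fin n) (Fin r) ℝ) (p : Matrix (Fin n) (Fin n) ℝ)
    (P₂ : Matrix (Fin r ⊕ Fin n) (Fin r ⊕ Fin n) ℝ)
    (hP₂ : P₂ = Matrix.fromBlocks p₁ p₃ p₂ p)
    (hP₂orth : P₂ᵀ * P₂ = 1 ∧ P₂ * P₂ᵀ = 1)
    (q : Matrix (Fin n) (Fin n) ℝ) (hqorth : qᵀ * q = 1 ∧ q * qᵀ = 1)
    (d : Fin n → ℝ)
    (hSVD : C = P₂ * Matrix.fromRows (0 : Matrix (Fin r) (Fin n) ℝ) (Matrix.diagonal d) * qᵀ)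
    (P : Matrix (Fin n ⊕ (Fin r ⊕ Fin n)) (Fin n ⊕ (Fin r ⊕ Fin n)) ℝ)
    (hP : P = Matrix.fromBlocks q 0 0 P₂) (s : ℝ) :
    NormedSpace.exp (s • B) =
      P * Matrix.fromBlocks
        (Matrix.diagonal fun i => (Real.exp (s * d i) + Real.exp (-(s * d i))) / 2)
        (Matrix.fromCols 0
          (Matrix.diagonal fun i => (Real.exp (s * d i) - Real.exp (-(s * d i))) / 2))
        (Matrix.fromRows 0
          (Matrix.diagonal fun i => (Real.exp (s * d i) - Real.exp (-(s * d i))) / 2))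
        (Matrix.fromBlocks 1 0 0
          (Matrix.diagonal fun i => (Real.exp (s * d i) + Real.exp (-(s * d i))) / 2)) *
      Pᵀ := by
  obtain ⟨hq1, hq2⟩ := hqorth
  obtain ⟨hP2l, hP2r⟩ := hP₂orth
  set W : Matrix (Fin n ⊕ (Fin r ⊕ Fin n)) (Fin n ⊕ (Fin r ⊕ Fin n)) ℝ :=
    Matrix.fromBlocks 1 (Matrix.fromCols 0 1) (Matrix.fromRows 0 (-1)) 1 with hW
  set Wi : Matrix (Fin n ⊕ (Fin r ⊕ Fin n)) (Fin n ⊕ (Fin r ⊕ Fin n)) ℝ :=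
    Matrix.fromBlocks ((1/2 : ℝ) • 1) (Matrix.fromCols 0 (-((1/2 : ℝ) • 1)))
      (Matrix.fromRows 0 ((1/2 : ℝ) • 1)) (Matrix.fromBlocks 1 0 0 ((1/2 : ℝ) • 1)) with hWi
  have hWWi : W * Wi = 1 := aux_WWinv n r
  have hWunit : IsUnit W :=
    (Matrix.isUnit_iff_isUnit_det W).mpr (Matrix.isUnit_det_of_right_inverse hWWi)
  have hWinv : W⁻¹ = Wi := Matrix.inv_eq_right_inv hWWi
  have hPPt : P * Pᵀ = 1 := by
    rw [hP]
    simp [Matrix.fromBlocks_transpose, Matrix.fromBlocks_multiply, hq2, hP2r,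
      ← Matrix.fromBlocks_one]
  have hPunit : IsUnit P :=
    (Matrix.isUnit_iff_isUnit_det P).mpr (Matrix.isUnit_det_of_right_inverse hPPt)
  have hPinv : P⁻¹ = Pᵀ := Matrix.inv_eq_right_inv hPPt
  set M : Matrix (Fin n ⊕ (Fin r ⊕ Fin n)) (Fin n ⊕ (Fin r ⊕ Fin n)) ℝ :=
    Matrix.fromBlocks 0 (Matrix.fromCols 0 (Matrix.diagonal fun i => s * d i))
      (Matrix.fromRows 0 (Matrix.diagonal fun i => s * d i)) 0 with hM
  have hCs : s • C = P₂ * Matrix.fromRows (0 : Matrix (Fin r) (Fin n) ℝ) (Matrix.diagonal fun i => s * d i) * qᵀ := by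
    rw [hSVD]
    have h1 : Matrix.fromRows (0 : Matrix (Fin r) (Fin n) ℝ)
        (Matrix.diagonal fun i => s * d i) = s • Matrix.fromRows 0 (Matrix.diagonal d) := by
      ext i j
      rcases i with i | i <;> simp [Matrix.diagonal_apply] <;> (try split) <;> simp
    rw [h1, Matrix.mul_smul, Matrix.smul_mul]
  have hCt : s • Cᵀ = q * Matrix.fromCols (0 : Matrix (Fin n) (Fin r) ℝ) (Matrix.diagonal fun i => s * d i) * P₂ᵀ := by
    have h2 := congrArg Matrix.transpose hCs
    rw [Matrix.transpose_smul, Matrix.transpose_mul, Matrix.transpose_mul,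
      Matrix.transpose_transpose, Matrix.transpose_fromRows, Matrix.transpose_zero,
      Matrix.diagonal_transpose] at h2
    rw [h2, Matrix.mul_assoc]
  have hBM : s • B = P * M * Pᵀ := by
    rw [hP, hM, Matrix.fromBlocks_transpose, Matrix.fromBlocks_multiply,
      Matrix.fromBlocks_multiply]
    simp only [Matrix.mul_zero, Matrix.zero_mul, add_zero, zero_add, Matrix.transpose_zero]
    rw [hB, ← hCt, ← hCs]
    simp [Matrix.fromBlocks_smul]
  set δ : (Fin n ⊕ (Fin r ⊕ Fin n)) → ℝ :=
    Sum.elim (fun i => -(s * d i)) (Sum.elim (fun _ => 0) fun i => s * d i) with hδ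
  have hMW : M = W * Matrix.diagonal δ * Wi := by
    rw [hδ, hW, hWi, aux_conj n r (fun i => -(s * d i)) (fun i => s * d i) fun _ => 0, hM]
    ext i j
    rcases i with i | i | i <;> rcases j with j | j | j <;>
      simp [Matrix.fromCols, Matrix.fromRows, Matrix.diagonal_apply] <;>
      (try split) <;> (try subst_vars) <;> ring
  have hexpδ : NormedSpace.exp (Matrix.diagonal δ) =
      Matrix.diagonal (Sum.elim (fun i => Real.exp (-(s * d i)))
        (Sum.elim (fun _ => (1 : ℝ)) fun i => Real.exp (s * d i))) := by
    rw [Matrix.exp_diagonal]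
    ext i j
    rcases i with i | i | i <;> rcases j with j | j | j <;>
      simp [Matrix.diagonal_apply, hδ, Pi.coe_exp, Real.exp_eq_exp_ℝ, NormedSpace.exp_zero]
  rw [hBM, hMW, hWinv.symm, hPinv.symm, Matrix.exp_conj P _ hPunit,
    Matrix.exp_conj W _ hWunit, hexpδ, hWinv, hPinv, hW, hWi,
    aux_conj n r (fun i => Real.exp (-(s * d i))) (fun i => Real.exp (s * d i))
      fun _ => (1 : ℝ)]
  congr 1
  congr 1
  ext i j
  rcases i with i | i | i <;> rcases j with j | j | j <;>
    simp [Matrix.fromCols, Matrix.fromRows, Matrix.diagonal_apply, Matrix.one_apply] <;>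
    (try split) <;> (try subst_vars) <;> ring
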